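/- If X_c and Y_c are independent circularly symmetric complex random variables and Z_c = √η·X_c + √(1-η)·Y_c, then the exponential generating functions of scaled even moments satisfy φ̃_{Z_c}(t) = φ̃_{X_c}(ηt)·φ̃_{Y_c}((1-η)t), based on the moment convolution formula E|U+V|^{2m} = Σ_{n=0}^m binom(m,n)²·E|U|^{2n}·E|V|^{2(m-n)}. -/

import Mathlib

open MeasureTheory

/-- A complex random variable is circularly symmetric if its distribution is invariant
under multiplication by any unit complex number. -/
def CircSymm {Ω : Type*} [MeasurableSpace Ω] (μ : Measure Ω) (U : Ω → ℂ) : Prop :=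
  ∀ θ : ℝ, Measure.map (fun ω => Complex.exp (θ * Complex.I) * U ω) μ = Measure.map U μ

/-- Exponential generating function of the scaled even absolute moments of a
complex random variable. -/
noncomputable def egfMoments {Ω : Type*} [MeasurableSpace Ω] (μ : Measure Ω)
    (W : Ω → ℂ) (t : ℝ) : ℝ :=
  ∑' m : ℕ, t ^ m / (Nat.factorial m : ℝ) *
    ((∫ ω, ‖W ω‖ ^ (2 * m) ∂μ) / (Nat.factorial m : ℝ))

open ProbabilityTheory

section Aux

variable {Ω : Type*} [MeasurableSpace Ω] {μ : Measure Ω}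

lemma indep_integral_mul_c {f g : Ω → ℂ} (h : IndepFun f g μ)
    (hf : Integrable f μ) (hg : Integrable g μ) :
    ∫ ω, f ω * g ω ∂μ = (∫ ω, f ω ∂μ) * ∫ ω, g ω ∂μ := by
  have hfr : Integrable (fun ω => (f ω).re) μ := by simpa using hf.re
  have hfi : Integrable (fun ω => (f ω).im) μ := by simpa using hf.im
  have hgr : Integrable (fun ω => (g ω).re) μ := by simpa using hg.re
  have hgi : Integrable (fun ω => (g ω).im) μ := by simpa using hg.im
  have hrr := (h.comp Complex.measurable_re Complex.measurable_re).integral_fun_mul_eq_mul_integral hfr.aestronglyMeasurable hgr.aestronglyMeasurable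
  have hri := (h.comp Complex.measurable_re Complex.measurable_im).integral_fun_mul_eq_mul_integral hfr.aestronglyMeasurable hgi.aestronglyMeasurable
  have hir := (h.comp Complex.measurable_im Complex.measurable_re).integral_fun_mul_eq_mul_integral hfi.aestronglyMeasurable hgr.aestronglyMeasurable
  have hii := (h.comp Complex.measurable_im Complex.measurable_im).integral_fun_mul_eq_mul_integral hfi.aestronglyMeasurable hgi.aestronglyMeasurable
  have irr : Integrable (fun ω => (f ω).re * (g ω).re) μ :=
    (h.comp Complex.measurable_re Complex.measurable_re).integrable_mul hfr hgr
  have iri : Integrable (fun ω => (f ω).re * (g ω).im) μ :=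
    (h.comp Complex.measurable_re Complex.measurable_im).integrable_mul hfr hgi
  have iir : Integrable (fun ω => (f ω).im * (g ω).re) μ :=
    (h.comp Complex.measurable_im Complex.measurable_re).integrable_mul hfi hgr
  have iii : Integrable (fun ω => (f ω).im * (g ω).im) μ :=
    (h.comp Complex.measurable_im Complex.measurable_im).integrable_mul hfi hgi
  have hfg : Integrable (fun ω => f ω * g ω) μ := h.integrable_mul hf hg
  have Hre : ∀ (F : Ω → ℂ), Integrable F μ → (∫ ω, F ω ∂μ).re = ∫ ω, (F ω).re ∂μ := by
    intro F hF
    simpa using (integral_re hF).symm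
  have Him : ∀ (F : Ω → ℂ), Integrable F μ → (∫ ω, F ω ∂μ).im = ∫ ω, (F ω).im ∂μ := by
    intro F hF
    simpa using (integral_im hF).symm
  have hrr' : ∫ ω, (f ω).re * (g ω).re ∂μ = (∫ ω, (f ω).re ∂μ) * ∫ ω, (g ω).re ∂μ := hrr
  have hri' : ∫ ω, (f ω).re * (g ω).im ∂μ = (∫ ω, (f ω).re ∂μ) * ∫ ω, (g ω).im ∂μ := hri
  have hir' : ∫ ω, (f ω).im * (g ω).re ∂μ = (∫ ω, (f ω).im ∂μ) * ∫ ω, (g ω).re ∂μ := hir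
  have hii' : ∫ ω, (f ω).im * (g ω).im ∂μ = (∫ ω, (f ω).im ∂μ) * ∫ ω, (g ω).im ∂μ := hii
  apply Complex.ext
  · rw [Hre _ hfg, Complex.mul_re, Hre _ hf, Hre _ hg, Him _ hf, Him _ hg]
    have : ∀ ω, (f ω * g ω).re = (f ω).re * (g ω).re - (f ω).im * (g ω).im := by
      intro ω; simp [Complex.mul_re]
    rw [integral_congr_ae (Filter.Eventually.of_forall this), integral_sub irr iii, hrr', hii']
  · rw [Him _ hfg, Complex.mul_im, Hre _ hf, Hre _ hg, Him _ hf, Him _ hg]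
    have : ∀ ω, (f ω * g ω).im = (f ω).re * (g ω).im + (f ω).im * (g ω).re := by
      intro ω; simp [Complex.mul_im]
    rw [integral_congr_ae (Filter.Eventually.of_forall this), integral_add iri iir, hri', hir']

lemma circ_vanish {U : Ω → ℂ} (hU : Measurable U) (hUc : CircSymm μ U)
    {j k : ℕ} (hjk : j ≠ k) :
    ∫ ω, U ω ^ j * (starRingEnd ℂ) (U ω) ^ k ∂μ = 0 := by
  set f : ℂ → ℂ := fun z => z ^ j * (starRingEnd ℂ) z ^ k with hfdef
  have hconj : Measurable fun z : ℂ => (starRingEnd ℂ) z := Complex.continuous_conj.measurable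
  have hfm : Measurable f := (measurable_id.pow_const j).mul (hconj.pow_const k)
  have hne : ((j : ℝ) - k) ≠ 0 := sub_ne_zero.2 (by exact_mod_cast hjk)
  set θ : ℝ := Real.pi / ((j : ℝ) - k) with hθdef
  have hθ : ((j : ℝ) - k) * θ = Real.pi := by
    rw [hθdef]; field_simp
  have key : ∫ ω, f (Complex.exp (θ * Complex.I) * U ω) ∂μ = ∫ ω, f (U ω) ∂μ := by
    rw [← integral_map (by fun_prop : Measurable fun ω => Complex.exp (θ * Complex.I) * U ω).aemeasurable
        hfm.aestronglyMeasurable, hUc θ,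
      integral_map hU.aemeasurable hfm.aestronglyMeasurable]
  have hpt : ∀ z : ℂ, f (Complex.exp (θ * Complex.I) * z) = -f z := by
    intro z
    have h1 : (starRingEnd ℂ) (Complex.exp (θ * Complex.I)) = Complex.exp (-(θ * Complex.I)) := by
      rw [← Complex.exp_conj]; simp
    simp only [hfdef, mul_pow, map_mul, h1]
    rw [← Complex.exp_nat_mul, ← Complex.exp_nat_mul]
    have : Complex.exp (j * (θ * Complex.I)) * z ^ j *
        (Complex.exp (k * -(θ * Complex.I)) ^ 1 * (starRingEnd ℂ) z ^ k)
        = (Complex.exp (j * (θ * Complex.I)) * Complex.exp (k * -(θ * Complex.I))) *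
          (z ^ j * (starRingEnd ℂ) z ^ k) := by ring
    rw [pow_one] at this
    rw [this, ← Complex.exp_add]
    have h2 : (j : ℂ) * (θ * Complex.I) + k * -(θ * Complex.I)
        = (((j : ℝ) - k) * θ : ℝ) * Complex.I := by push_cast; ring
    rw [h2, hθ, Complex.exp_pi_mul_I]
    ring
  simp_rw [hpt] at key
  rw [integral_neg] at key
  have : ∫ ω, f (U ω) ∂μ = 0 := by linear_combination (-1/2 : ℂ) * key
  simpa [hfdef] using this

lemma diag_moment (U : Ω → ℂ) (n : ℕ) :
    ∫ ω, U ω ^ n * (starRingEnd ℂ) (U ω) ^ n ∂μ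
      = ((∫ ω, ‖U ω‖ ^ (2 * n) ∂μ : ℝ) : ℂ) := by
  have : ∀ ω, U ω ^ n * (starRingEnd ℂ) (U ω) ^ n
      = ((‖U ω‖ ^ (2 * n) : ℝ) : ℂ) := by
    intro ω
    rw [← mul_pow, Complex.mul_conj, ← Complex.sq_norm, pow_mul]
    push_cast
    ring
  simp_rw [this]
  exact integral_ofReal

lemma integrable_mixed {U : Ω → ℂ} (hU : Measurable U)
    (hUm : ∀ k : ℕ, Integrable (fun ω => ‖U ω‖ ^ k) μ) (j k : ℕ) :
    Integrable (fun ω => U ω ^ j * (starRingEnd ℂ) (U ω) ^ k) μ := by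
  have hconj : Measurable fun z : ℂ => (starRingEnd ℂ) z := Complex.continuous_conj.measurable
  refine (hUm (j + k)).mono'
    (((hU.pow_const j).mul ((hconj.comp hU).pow_const k)).aestronglyMeasurable) ?_
  filter_upwards with ω
  simp [norm_mul, norm_pow, Complex.norm_conj, pow_add, le_refl]

lemma moment_conv {X Y : Ω → ℂ}
    (hX : Measurable X) (hY : Measurable Y) (hXY : IndepFun X Y μ)
    (hXc : CircSymm μ X) (hYc : CircSymm μ Y)
    (hXm : ∀ k : ℕ, Integrable (fun ω => ‖X ω‖ ^ k) μ)
    (hYm : ∀ k : ℕ, Integrable (fun ω => ‖Y ω‖ ^ k) μ)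
    (a b : ℝ) (m : ℕ) :
    ∫ ω, ‖(a : ℂ) * X ω + (b : ℂ) * Y ω‖ ^ (2 * m) ∂μ
      = ∑ n ∈ Finset.range (m + 1), (m.choose n : ℝ) ^ 2 * (a ^ 2) ^ n * (b ^ 2) ^ (m - n) *
          ((∫ ω, ‖X ω‖ ^ (2 * n) ∂μ) * ∫ ω, ‖Y ω‖ ^ (2 * (m - n)) ∂μ) := by
  have hconj : Measurable fun z : ℂ => (starRingEnd ℂ) z := Complex.continuous_conj.measurable
  have expand : ∀ ω, ((a : ℂ) * X ω + (b : ℂ) * Y ω) ^ m *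
      (starRingEnd ℂ) ((a : ℂ) * X ω + (b : ℂ) * Y ω) ^ m
      = ∑ j ∈ Finset.range (m + 1), ∑ k ∈ Finset.range (m + 1),
          ((m.choose j : ℂ) * (m.choose k : ℂ) * (a : ℂ) ^ (j + k) *
            (b : ℂ) ^ ((m - j) + (m - k))) *
          ((X ω ^ j * (starRingEnd ℂ) (X ω) ^ k) *
            (Y ω ^ (m - j) * (starRingEnd ℂ) (Y ω) ^ (m - k))) := by
    intro ω
    rw [add_pow, map_add, map_mul, map_mul, Complex.conj_ofReal, Complex.conj_ofReal, add_pow,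
      Finset.sum_mul_sum]
    apply Finset.sum_congr rfl; intro j _
    apply Finset.sum_congr rfl; intro k _
    simp only [mul_pow, pow_add]
    ring
  have hint : ∀ j k p q : ℕ, Integrable (fun ω =>
      (X ω ^ j * (starRingEnd ℂ) (X ω) ^ k) * (Y ω ^ p * (starRingEnd ℂ) (Y ω) ^ q)) μ := by
    intro j k p q
    exact (hXY.comp ((measurable_id.pow_const j).mul (hconj.pow_const k))
      ((measurable_id.pow_const p).mul (hconj.pow_const q))).integrable_mul
      (integrable_mixed hX hXm j k) (integrable_mixed hY hYm p q)
  have keyC : ∫ ω, ((a : ℂ) * X ω + (b : ℂ) * Y ω) ^ m *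
      (starRingEnd ℂ) ((a : ℂ) * X ω + (b : ℂ) * Y ω) ^ m ∂μ
      = ((∑ n ∈ Finset.range (m + 1), (m.choose n : ℝ) ^ 2 * (a ^ 2) ^ n *
          (b ^ 2) ^ (m - n) * ((∫ ω, ‖X ω‖ ^ (2 * n) ∂μ) *
            ∫ ω, ‖Y ω‖ ^ (2 * (m - n)) ∂μ) : ℝ) : ℂ) := by
    simp_rw [expand]
    rw [integral_finset_sum _ (fun j _ => integrable_finset_sum _
      (fun k _ => (hint j k (m - j) (m - k)).const_mul _))]
    have step : ∀ j ∈ Finset.range (m + 1),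
        (∫ ω, ∑ k ∈ Finset.range (m + 1),
          ((m.choose j : ℂ) * (m.choose k : ℂ) * (a : ℂ) ^ (j + k) *
            (b : ℂ) ^ ((m - j) + (m - k))) *
          ((X ω ^ j * (starRingEnd ℂ) (X ω) ^ k) *
            (Y ω ^ (m - j) * (starRingEnd ℂ) (Y ω) ^ (m - k))) ∂μ)
        = ((m.choose j : ℂ)) ^ 2 * ((a : ℂ) ^ 2) ^ j * ((b : ℂ) ^ 2) ^ (m - j) *
            (((∫ ω, ‖X ω‖ ^ (2 * j) ∂μ : ℝ) : ℂ) *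
              ((∫ ω, ‖Y ω‖ ^ (2 * (m - j)) ∂μ : ℝ) : ℂ)) := by
      intro j hj
      rw [integral_finset_sum _ (fun k _ => (hint j k (m - j) (m - k)).const_mul _)]
      have inner : ∀ k ∈ Finset.range (m + 1),
          (∫ ω, ((m.choose j : ℂ) * (m.choose k : ℂ) * (a : ℂ) ^ (j + k) *
            (b : ℂ) ^ ((m - j) + (m - k))) *
            ((X ω ^ j * (starRingEnd ℂ) (X ω) ^ k) *
              (Y ω ^ (m - j) * (starRingEnd ℂ) (Y ω) ^ (m - k))) ∂μ)
          = ((m.choose j : ℂ) * (m.choose k : ℂ) * (a : ℂ) ^ (j + k) *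
              (b : ℂ) ^ ((m - j) + (m - k))) *
            ((∫ ω, X ω ^ j * (starRingEnd ℂ) (X ω) ^ k ∂μ) *
              ∫ ω, Y ω ^ (m - j) * (starRingEnd ℂ) (Y ω) ^ (m - k) ∂μ) := by
        intro k _
        rw [integral_const_mul]
        congr 1
        exact indep_integral_mul_c
          (hXY.comp ((measurable_id.pow_const j).mul (hconj.pow_const k))
            ((measurable_id.pow_const (m - j)).mul (hconj.pow_const (m - k))))
          (integrable_mixed hX hXm j k) (integrable_mixed hY hYm (m - j) (m - k))
      rw [Finset.sum_congr rfl inner,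
        Finset.sum_eq_single_of_mem j hj (fun k _ hk => by
          rw [circ_vanish hX hXc (Ne.symm hk)]; simp),
        diag_moment X j, diag_moment Y (m - j)]
      ring
    rw [Finset.sum_congr rfl step]
    push_cast
    apply Finset.sum_congr rfl
    intro j _
    push_cast
    ring
  apply Complex.ofReal_injective
  exact (diag_moment (fun ω => (a : ℂ) * X ω + (b : ℂ) * Y ω) m).symm.trans keyC

end Aux

theorem egf_beamsplitter {Ω : Type*} [MeasurableSpace Ω] (μ : Measure Ω)
    [IsProbabilityMeasure μ] (X Y : Ω → ℂ)
    (hX : Measurable X) (hY : Measurable Y)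
    (hXY : ProbabilityTheory.IndepFun X Y μ)
    (hXc : CircSymm μ X) (hYc : CircSymm μ Y)
    (hXm : ∀ k : ℕ, Integrable (fun ω => ‖X ω‖ ^ k) μ)
    (hYm : ∀ k : ℕ, Integrable (fun ω => ‖Y ω‖ ^ k) μ)
    (η : ℝ) (hη0 : 0 ≤ η) (hη1 : η ≤ 1) (t : ℝ)
    (hXs : Summable fun m : ℕ => |(η * t) ^ m / (Nat.factorial m : ℝ) *
      ((∫ ω, ‖X ω‖ ^ (2 * m) ∂μ) / (Nat.factorial m : ℝ))|)
    (hYs : Summable fun m : ℕ => |((1 - η) * t) ^ m / (Nat.factorial m : ℝ) *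
      ((∫ ω, ‖Y ω‖ ^ (2 * m) ∂μ) / (Nat.factorial m : ℝ))|) :
    egfMoments μ (fun ω => (Real.sqrt η : ℂ) * X ω + (Real.sqrt (1 - η) : ℂ) * Y ω) t
      = egfMoments μ X (η * t) * egfMoments μ Y ((1 - η) * t) := by
  have h1η : (0 : ℝ) ≤ 1 - η := sub_nonneg.2 hη1
  let f : ℕ → ℝ := fun n => (η * t) ^ n / (Nat.factorial n : ℝ) *
    ((∫ ω, ‖X ω‖ ^ (2 * n) ∂μ) / (Nat.factorial n : ℝ))
  let g : ℕ → ℝ := fun n => ((1 - η) * t) ^ n / (Nat.factorial n : ℝ) *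
    ((∫ ω, ‖Y ω‖ ^ (2 * n) ∂μ) / (Nat.factorial n : ℝ))
  have hfs : Summable fun n => ‖f n‖ := by simpa only [Real.norm_eq_abs] using hXs
  have hgs : Summable fun n => ‖g n‖ := by simpa only [Real.norm_eq_abs] using hYs
  have cauchy := tsum_mul_tsum_eq_tsum_sum_range_of_summable_norm hfs hgs
  unfold egfMoments
  rw [show (∑' m : ℕ, (η * t) ^ m / (Nat.factorial m : ℝ) *
      ((∫ ω, ‖X ω‖ ^ (2 * m) ∂μ) / (Nat.factorial m : ℝ))) = ∑' n, f n from rfl,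
    show (∑' m : ℕ, ((1 - η) * t) ^ m / (Nat.factorial m : ℝ) *
      ((∫ ω, ‖Y ω‖ ^ (2 * m) ∂μ) / (Nat.factorial m : ℝ))) = ∑' n, g n from rfl,
    cauchy]
  apply tsum_congr
  intro m
  have hmc := moment_conv hX hY hXY hXc hYc hXm hYm (Real.sqrt η) (Real.sqrt (1 - η)) m
  rw [Real.sq_sqrt hη0, Real.sq_sqrt h1η] at hmc
  rw [hmc, Finset.sum_div, Finset.mul_sum]
  apply Finset.sum_congr rfl
  intro n hn
  have hnm : n ≤ m := Nat.lt_succ_iff.mp (Finset.mem_range.mp hn)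
  have hc : (m.choose n : ℝ) = (Nat.factorial m : ℝ) /
      ((Nat.factorial n : ℝ) * (Nat.factorial (m - n) : ℝ)) := Nat.cast_choose ℝ hnm
  have ht : t ^ m = t ^ n * t ^ (m - n) := by
    rw [← pow_add, Nat.add_sub_cancel' hnm]
  show _ = f n * g (m - n)
  simp only [f, g, mul_pow]
  rw [hc, ht]
  have h1 : (Nat.factorial m : ℝ) ≠ 0 := Nat.cast_ne_zero.2 (Nat.factorial_ne_zero m)
  have h2 : (Nat.factorial n : ℝ) ≠ 0 := Nat.cast_ne_zero.2 (Nat.factorial_ne_zero n)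
  have h3 : (Nat.factorial (m - n) : ℝ) ≠ 0 := Nat.cast_ne_zero.2 (Nat.factorial_ne_zero (m - n))
  field_simp
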